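/- Let β ∈ (0,1) be given and fixed. There exist constants c₁, c₂ > 0 depending only on α and β such that for every integer n ≥ 1: (i) sup_{x ∈ [a_{βn}, ∞)} ψ_n(x) ≤ c₁ · a_n · n^{−2/3}; and (ii) for every x ∈ S_{βn} = [0, a_{βn}], ψ_n(x) ≤ c₂ · (√(a_n)/n) · √(x + a_n n^{−2}). -/

import Mathlib

open MeasureTheory Polynomial

/-- Mhaskar–Rakhmanov–Saff numbers for the weight `√w`, `w(z) = exp(-z^α)` on `[0, ∞)`. -/
noncomputable def mrsH (α t : ℝ) : ℝ :=
  t ^ (1 / α) * (2 * Real.sqrt Real.pi * Real.Gamma α / Real.Gamma (α + 1 / 2)) ^ (1 / α)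

/-- `η_n = (α n)^{-2/3}`. -/
noncomputable def etaH (α : ℝ) (n : ℕ) : ℝ := (α * n) ^ (-(2 / 3) : ℝ)

/-- The inner formula of the auxiliary function `ψ_n` on the half line. -/
noncomputable def psiAuxH (α : ℝ) (n : ℕ) (x : ℝ) : ℝ :=
  (mrsH α (2 * (n : ℝ)) - x) * Real.sqrt (x + mrsH α n / (n : ℝ) ^ 2) /
    ((n : ℝ) * Real.sqrt (mrsH α n - x + mrsH α n * etaH α n))

/-- The auxiliary function `ψ_n` on the half line: the inner formula on `[0, a_n]`,
the value `ψ_n(a_n)` for `x > a_n`, and the value `ψ_n(0)` for `x < 0`. -/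
noncomputable def psiH (α : ℝ) (n : ℕ) (x : ℝ) : ℝ :=
  if x < 0 then psiAuxH α n 0
  else if x ≤ mrsH α n then psiAuxH α n x
  else psiAuxH α n (mrsH α n)

lemma mrs_pos {α : ℝ} (hα : 0 < α) {t : ℝ} (ht : 0 < t) : 0 < mrsH α t := by
  have h1 : 0 < Real.Gamma α := Real.Gamma_pos_of_pos hα
  have h2 : 0 < Real.Gamma (α + 1 / 2) := Real.Gamma_pos_of_pos (by linarith)
  have h3 : 0 < Real.sqrt Real.pi := Real.sqrt_pos.mpr Real.pi_pos
  unfold mrsH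
  positivity

lemma mrs_mul {α : ℝ} (hα : 0 < α) {s t : ℝ} (hs : 0 ≤ s) (ht : 0 ≤ t) :
    mrsH α (s * t) = s ^ (1 / α) * mrsH α t := by
  unfold mrsH
  rw [Real.mul_rpow hs ht]
  ring

lemma psiAux_le₁ {α : ℝ} (hα : 1 / 2 < α) {n : ℕ} (hn : 1 ≤ n) {x : ℝ}
    (hx0 : 0 ≤ x) (hxn : x ≤ mrsH α n) :
    psiAuxH α n x ≤
      (2 ^ (1 / α) * Real.sqrt 2 * α ^ ((1 : ℝ) / 3)) * mrsH α n * (n : ℝ) ^ (-(2 / 3) : ℝ) := by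
  have hα0 : 0 < α := by linarith
  have hn0 : (0 : ℝ) < n := by exact_mod_cast hn
  set an := mrsH α (n : ℝ) with han_def
  have han : 0 < an := mrs_pos hα0 hn0
  have h2n : mrsH α (2 * (n : ℝ)) = 2 ^ (1 / α) * an :=
    mrs_mul hα0 (by norm_num) hn0.le
  have hη : 0 < etaH α n := Real.rpow_pos_of_pos (by positivity) _
  have hone : (1 : ℝ) ≤ 2 ^ (1 / α) :=
    Real.one_le_rpow (by norm_num) (by positivity)
  have hD : 0 < (n : ℝ) * Real.sqrt (an - x + an * etaH α n) := by
    have : 0 < an - x + an * etaH α n := by nlinarith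
    positivity
  unfold psiAuxH
  rw [div_le_iff₀ hD, h2n]
  have hsqeta : Real.sqrt (etaH α n) = α ^ (-(1/3) : ℝ) * (n : ℝ) ^ (-(1/3) : ℝ) := by
    unfold etaH
    rw [Real.sqrt_eq_rpow, ← Real.rpow_mul (by positivity),
      show (-(2/3) : ℝ) * (1/2) = -(1/3) by norm_num, Real.mul_rpow hα0.le hn0.le]
  have hnn : (n : ℝ) ^ (-(2/3) : ℝ) * ((n : ℝ) * (n : ℝ) ^ (-(1/3) : ℝ)) = 1 := by
    have h : (n : ℝ) ^ (-(2/3) : ℝ) * ((n : ℝ) ^ (1:ℝ) * (n : ℝ) ^ (-(1/3) : ℝ)) = 1 := by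
      rw [← Real.rpow_add hn0, ← Real.rpow_add hn0]
      norm_num
    simpa using h
  have haa : α ^ ((1:ℝ)/3) * α ^ (-(1/3) : ℝ) = 1 := by
    rw [← Real.rpow_add hα0]
    norm_num
  have key : (2 ^ (1 / α) * Real.sqrt 2 * α ^ ((1 : ℝ) / 3)) * an * (n : ℝ) ^ (-(2 / 3) : ℝ) *
      ((n : ℝ) * Real.sqrt (an * etaH α n)) = 2 ^ (1 / α) * an * Real.sqrt (2 * an) := by
    rw [Real.sqrt_mul han.le, Real.sqrt_mul (by norm_num : (0:ℝ) ≤ 2), hsqeta]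
    linear_combination
      (2 ^ (1 / α) * Real.sqrt 2 * an * Real.sqrt an * (α ^ ((1:ℝ)/3) * α ^ (-(1/3) : ℝ))) * hnn +
      (2 ^ (1 / α) * Real.sqrt 2 * an * Real.sqrt an) * haa
  calc (2 ^ (1 / α) * an - x) * Real.sqrt (x + an / (n : ℝ) ^ 2)
      ≤ 2 ^ (1 / α) * an * Real.sqrt (2 * an) := by
        have h1 : 2 ^ (1 / α) * an - x ≤ 2 ^ (1 / α) * an := by linarith
        have h2 : Real.sqrt (x + an / (n : ℝ) ^ 2) ≤ Real.sqrt (2 * an) := by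
          apply Real.sqrt_le_sqrt
          have : an / (n : ℝ) ^ 2 ≤ an := by
            apply div_le_self han.le
            have h1n : (1 : ℝ) ≤ (n : ℝ) := by exact_mod_cast hn
            nlinarith
          linarith
        have h3 : 0 ≤ 2 ^ (1 / α) * an - x := by nlinarith
        exact mul_le_mul h1 h2 (Real.sqrt_nonneg _) (by positivity)
    _ = (2 ^ (1 / α) * Real.sqrt 2 * α ^ ((1 : ℝ) / 3)) * an * (n : ℝ) ^ (-(2 / 3) : ℝ) *
        ((n : ℝ) * Real.sqrt (an * etaH α n)) := key.symm
    _ ≤ (2 ^ (1 / α) * Real.sqrt 2 * α ^ ((1 : ℝ) / 3)) * an * (n : ℝ) ^ (-(2 / 3) : ℝ) *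
        ((n : ℝ) * Real.sqrt (an - x + an * etaH α n)) := by
        apply mul_le_mul_of_nonneg_left _ (by positivity)
        apply mul_le_mul_of_nonneg_left _ hn0.le
        exact Real.sqrt_le_sqrt (by linarith)

lemma psiAux_le₂ {α : ℝ} (hα : 1 / 2 < α) {β : ℝ} (hβ0 : 0 < β) (hβ1 : β < 1)
    {n : ℕ} (hn : 1 ≤ n) {x : ℝ} (hx0 : 0 ≤ x) (hxb : x ≤ mrsH α (β * n)) :
    psiAuxH α n x ≤ (2 ^ (1 / α) / Real.sqrt (1 - β ^ (1 / α))) *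
      (Real.sqrt (mrsH α n) / n) * Real.sqrt (x + mrsH α n / (n : ℝ) ^ 2) := by
  have hα0 : 0 < α := by linarith
  have hn0 : (0 : ℝ) < n := by exact_mod_cast hn
  set an := mrsH α (n : ℝ) with han_def
  have han : 0 < an := mrs_pos hα0 hn0
  have h2n : mrsH α (2 * (n : ℝ)) = 2 ^ (1 / α) * an :=
    mrs_mul hα0 (by norm_num) hn0.le
  have hbn : mrsH α (β * (n : ℝ)) = β ^ (1 / α) * an :=
    mrs_mul hα0 hβ0.le hn0.le
  have hβα : β ^ (1 / α) < 1 := Real.rpow_lt_one hβ0.le hβ1 (by positivity)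
  have hβα0 : 0 < β ^ (1 / α) := Real.rpow_pos_of_pos hβ0 _
  have h1β : 0 < 1 - β ^ (1 / α) := by linarith
  have hη : 0 < etaH α n := Real.rpow_pos_of_pos (by positivity) _
  have hxan : x ≤ an := by
    rw [hbn] at hxb
    nlinarith
  have hD : 0 < (n : ℝ) * Real.sqrt (an - x + an * etaH α n) := by
    have : 0 < an - x + an * etaH α n := by nlinarith
    positivity
  unfold psiAuxH
  rw [div_le_iff₀ hD, h2n]
  set S := Real.sqrt (x + an / (n : ℝ) ^ 2) with hS_def
  have hS : 0 ≤ S := Real.sqrt_nonneg _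
  have hDlow : Real.sqrt (1 - β ^ (1 / α)) * Real.sqrt an ≤
      Real.sqrt (an - x + an * etaH α n) := by
    rw [← Real.sqrt_mul h1β.le]
    apply Real.sqrt_le_sqrt
    rw [hbn] at hxb
    nlinarith
  have hc2 : (2 ^ (1 / α) / Real.sqrt (1 - β ^ (1 / α))) * Real.sqrt (1 - β ^ (1 / α)) =
      2 ^ (1 / α) := by
    field_simp
  calc (2 ^ (1 / α) * an - x) * S ≤ 2 ^ (1 / α) * an * S := by nlinarith
    _ = (2 ^ (1 / α) / Real.sqrt (1 - β ^ (1 / α))) * (Real.sqrt an / n) * S *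
        ((n : ℝ) * (Real.sqrt (1 - β ^ (1 / α)) * Real.sqrt an)) := by
        have hsq : Real.sqrt an * Real.sqrt an = an := Real.mul_self_sqrt han.le
        have hne : Real.sqrt (1 - β ^ (1 / α)) ≠ 0 := by positivity
        have hnne : (n : ℝ) ≠ 0 := ne_of_gt hn0
        field_simp
        linear_combination (-S) * hsq
    _ ≤ (2 ^ (1 / α) / Real.sqrt (1 - β ^ (1 / α))) * (Real.sqrt an / n) * S *
        ((n : ℝ) * Real.sqrt (an - x + an * etaH α n)) := by
        apply mul_le_mul_of_nonneg_left _ (by positivity)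
        exact mul_le_mul_of_nonneg_left hDlow hn0.le

theorem stmt_16 (α : ℝ) (hα : 1 / 2 < α) (β : ℝ) (hβ0 : 0 < β) (hβ1 : β < 1) :
    ∃ c₁ : ℝ, 0 < c₁ ∧ ∃ c₂ : ℝ, 0 < c₂ ∧ ∀ n : ℕ, 1 ≤ n →
      (∀ x ∈ Set.Ici (mrsH α (β * n)),
        psiH α n x ≤ c₁ * mrsH α n * (n : ℝ) ^ (-(2 / 3) : ℝ))
      ∧ (∀ x ∈ Set.Icc (0 : ℝ) (mrsH α (β * n)),
        psiH α n x ≤ c₂ * (Real.sqrt (mrsH α n) / n) * Real.sqrt (x + mrsH α n / (n : ℝ) ^ 2)) := by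
  have hα0 : 0 < α := by linarith
  have hβα : β ^ (1 / α) < 1 := Real.rpow_lt_one hβ0.le hβ1 (by positivity)
  have hβα0 : 0 < β ^ (1 / α) := Real.rpow_pos_of_pos hβ0 _
  have h1β : 0 < 1 - β ^ (1 / α) := by linarith
  refine ⟨2 ^ (1 / α) * Real.sqrt 2 * α ^ ((1 : ℝ) / 3), by positivity,
    2 ^ (1 / α) / Real.sqrt (1 - β ^ (1 / α)), by positivity, fun n hn => ?_⟩
  have hn0 : (0 : ℝ) < n := by exact_mod_cast hn
  have han : 0 < mrsH α n := mrs_pos hα0 hn0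
  have habn : 0 < mrsH α (β * n) := mrs_pos hα0 (by positivity)
  have hbn : mrsH α (β * (n : ℝ)) = β ^ (1 / α) * mrsH α n :=
    mrs_mul hα0 hβ0.le hn0.le
  have habn_lt : mrsH α (β * n) < mrsH α n := by
    rw [hbn]
    nlinarith
  constructor
  · intro x hx
    simp only [Set.mem_Ici] at hx
    have hx0 : 0 ≤ x := le_trans habn.le hx
    unfold psiH
    rw [if_neg (not_lt.mpr hx0)]
    split_ifs with h
    · exact psiAux_le₁ hα hn hx0 h
    · exact psiAux_le₁ hα hn han.le le_rfl
  · intro x hx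
    obtain ⟨hx0, hxb⟩ := hx
    have hxan : x ≤ mrsH α n := le_trans hxb habn_lt.le
    unfold psiH
    rw [if_neg (not_lt.mpr hx0), if_pos hxan]
    exact psiAux_le₂ hα hβ0 hβ1 hn hx0 hxb
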